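/- A point p in a polyhedron P = {x ∈ ℝ^n : Ax ≤ b} is Pareto optimal (no y ∈ P with y ≥ p coordinatewise and y ≠ p) if and only if there exists a strictly positive weight vector w > 0 such that p maximizes wᵀx over P. -/

import Mathlib

open Finset Matrix

/-- Homogeneous Farkas lemma, proved by induction on the generating set. -/
theorem farkas_aux {ι κ : Type*} [Fintype κ] [DecidableEq ι] (S : Finset ι) :
    ∀ (v : ι → κ → ℝ) (c : κ → ℝ),
      (∀ x : κ → ℝ, (∀ i ∈ S, v i ⬝ᵥ x ≤ 0) → c ⬝ᵥ x ≤ 0) →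
      ∃ u : ι → ℝ, (∀ i, 0 ≤ u i) ∧ c = ∑ i ∈ S, u i • v i := by
  induction S using Finset.induction_on with
  | empty =>
    intro v c h
    refine ⟨0, fun i => le_rfl, ?_⟩
    have h1 : c ⬝ᵥ c ≤ 0 := h c (by simp)
    have h2 : (0:ℝ) ≤ c ⬝ᵥ c := Finset.sum_nonneg fun i _ => mul_self_nonneg _
    have h3 : c = 0 := dotProduct_self_eq_zero.mp (le_antisymm h1 h2)
    simpa using h3
  | @insert a S ha IH =>
    intro v c h
    by_cases hc : ∀ x : κ → ℝ, (∀ i ∈ S, v i ⬝ᵥ x ≤ 0) → c ⬝ᵥ x ≤ 0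
    · obtain ⟨u, hu, hsum⟩ := IH v c hc
      refine ⟨fun i => if i = a then 0 else u i, fun i => ?_, ?_⟩
      · dsimp only; split
        · exact le_rfl
        · exact hu i
      · rw [Finset.sum_insert ha]
        dsimp only
        rw [if_pos rfl, zero_smul, zero_add, hsum]
        refine Finset.sum_congr rfl fun i hi => ?_
        have hia : ¬ (i = a) := fun h' => ha (h' ▸ hi)
        rw [if_neg hia]
    · push_neg at hc
      obtain ⟨x, hxS, hcx⟩ := hc
      have hwx : 0 < v a ⬝ᵥ x := by
        by_contra hle
        push_neg at hle
        refine absurd (h x fun i hi => ?_) (not_le.mpr hcx)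
        rcases Finset.mem_insert.mp hi with rfl | hi
        · exact hle
        · exact hxS i hi
      set γ : ℝ := v a ⬝ᵥ x with hγ
      have key : ∀ (z d : κ → ℝ),
          d ⬝ᵥ (γ • z - (v a ⬝ᵥ z) • x) = (γ • d - (d ⬝ᵥ x) • v a) ⬝ᵥ z := by
        intro z d
        simp only [dotProduct_sub, dotProduct_smul, sub_dotProduct, smul_dotProduct,
          smul_eq_mul]
        ring
      have h' : ∀ y : κ → ℝ,
          (∀ i ∈ S, (γ • v i - (v i ⬝ᵥ x) • v a) ⬝ᵥ y ≤ 0) →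
          (γ • c - (c ⬝ᵥ x) • v a) ⬝ᵥ y ≤ 0 := by
        intro y hy
        rw [← key]
        refine h _ fun i hi => ?_
        rcases Finset.mem_insert.mp hi with rfl | hi
        · rw [key]
          have : γ • v i - (v i ⬝ᵥ x) • v i = 0 := by rw [← hγ, sub_self]
          rw [this, zero_dotProduct]
        · rw [key]
          exact hy i hi
      obtain ⟨u', hu', hsum'⟩ := IH (fun i => γ • v i - (v i ⬝ᵥ x) • v a)
        (γ • c - (c ⬝ᵥ x) • v a) h'
      set μ : ℝ := (c ⬝ᵥ x - ∑ i ∈ S, u' i * (v i ⬝ᵥ x)) / γ with hμdef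
      have hγμ : γ * μ = c ⬝ᵥ x - ∑ i ∈ S, u' i * (v i ⬝ᵥ x) :=
        mul_div_cancel₀ _ (ne_of_gt hwx)
      have hμ : 0 ≤ μ := by
        apply div_nonneg _ (le_of_lt hwx)
        have : ∑ i ∈ S, u' i * (v i ⬝ᵥ x) ≤ 0 :=
          Finset.sum_nonpos fun i hi => mul_nonpos_of_nonneg_of_nonpos (hu' i) (hxS i hi)
        linarith
      clear_value μ
      refine ⟨fun i => if i = a then μ else u' i, fun i => ?_, ?_⟩
      · dsimp only; split
        · exact hμ
        · exact hu' i
      · rw [Finset.sum_insert ha]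
        dsimp only
        rw [if_pos rfl]
        have hrest : ∑ i ∈ S, (if i = a then μ else u' i) • v i
            = ∑ i ∈ S, u' i • v i := by
          refine Finset.sum_congr rfl fun i hi => ?_
          have hia : ¬ (i = a) := fun h' => ha (h' ▸ hi)
          simp only [if_neg hia]
        rw [hrest]
        funext k
        have hs := congrFun hsum' k
        simp only [Pi.sub_apply, Pi.smul_apply, smul_eq_mul, Finset.sum_apply] at hs
        have hsplit : ∑ i ∈ S, u' i * (γ * v i k - (v i ⬝ᵥ x) * v a k)
            = γ * (∑ i ∈ S, u' i * v i k) - (∑ i ∈ S, u' i * (v i ⬝ᵥ x)) * v a k := by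
          rw [Finset.mul_sum, Finset.sum_mul, ← Finset.sum_sub_distrib]
          exact Finset.sum_congr rfl fun i _ => by ring
        simp only [Pi.add_apply, Pi.smul_apply, smul_eq_mul, Finset.sum_apply]
        apply mul_left_cancel₀ (ne_of_gt hwx)
        rw [hsplit] at hs
        rw [mul_add, ← mul_assoc, hγμ]
        linarith [hs]

/-- A point of a polyhedron `{x : A x ≤ b}` is Pareto optimal iff it maximizes some
strictly positive weighted sum of coordinates over the polyhedron. -/
theorem stmt_14 {m n : ℕ} (A : Matrix (Fin m) (Fin n) ℝ) (b : Fin m → ℝ)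
    (p : Fin n → ℝ) (hp : A.mulVec p ≤ b) :
    (¬ ∃ y : Fin n → ℝ, A.mulVec y ≤ b ∧ p ≤ y ∧ y ≠ p) ↔
    ∃ w : Fin n → ℝ, (∀ j, 0 < w j) ∧
      ∀ x : Fin n → ℝ, A.mulVec x ≤ b → ∑ j, w j * x j ≤ ∑ j, w j * p j := by
  classical
  constructor
  · intro hpar
    set b' : Fin m → ℝ := fun i => b i - A.mulVec p i with hb'
    have hb'0 : ∀ i, 0 ≤ b' i := fun i => sub_nonneg.mpr (hp i)
    set v : (Fin m ⊕ (Fin n ⊕ Unit)) → ((Fin n ⊕ Unit) → ℝ) :=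
      Sum.elim (fun i => Sum.elim (A i) (fun _ => -(b' i)))
        (Sum.elim (fun j => Sum.elim (fun j' => if j' = j then (-1:ℝ) else 0) 0)
          (fun _ => Sum.elim 0 (fun _ => (-1:ℝ)))) with hv
    set c : (Fin n ⊕ Unit) → ℝ := Sum.elim (fun _ => (1:ℝ)) 0 with hcdef
    have hmain : ∀ z : (Fin n ⊕ Unit) → ℝ,
        (∀ i ∈ Finset.univ, v i ⬝ᵥ z ≤ 0) → c ⬝ᵥ z ≤ 0 := by
      intro z hz
      set t : ℝ := z (Sum.inr ()) with ht
      have htn : 0 ≤ t := by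
        have h1 := hz (Sum.inr (Sum.inr ())) (Finset.mem_univ _)
        simp [hv, dotProduct, Fintype.sum_sum_type] at h1
        linarith
      have hA : ∀ i, (∑ j, A i j * z (Sum.inl j)) ≤ t * b' i := by
        intro i
        have h1 := hz (Sum.inl i) (Finset.mem_univ _)
        simp [hv, dotProduct, Fintype.sum_sum_type] at h1
        linarith
      set s : ℝ := max t 1 with hs
      have hs0 : (0:ℝ) < s := lt_of_lt_of_le one_pos (le_max_right _ _)
      set y : Fin n → ℝ := fun j => p j + z (Sum.inl j) / s with hy
      have hxn : ∀ j, 0 ≤ z (Sum.inl j) := by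
        intro j
        have h1 := hz (Sum.inr (Sum.inl j)) (Finset.mem_univ _)
        simp [hv, dotProduct, Fintype.sum_sum_type, ite_mul, zero_mul] at h1
        linarith
      have hyge : p ≤ y := by
        intro j
        have : 0 ≤ z (Sum.inl j) / s := div_nonneg (hxn j) (le_of_lt hs0)
        simp only [hy]
        linarith
      have hyP : A.mulVec y ≤ b := by
        intro i
        have h1 : A.mulVec y i = A.mulVec p i + (∑ j, A i j * z (Sum.inl j)) / s := by
          simp [Matrix.mulVec, dotProduct, hy, mul_add, Finset.sum_add_distrib,
            mul_div_assoc, Finset.sum_div]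
        have h2 : (∑ j, A i j * z (Sum.inl j)) / s ≤ (t * b' i) / s := by
          gcongr
          exact hA i
        have h3 : t / s ≤ 1 := (div_le_one hs0).mpr (le_max_left _ _)
        have h4 : (t * b' i) / s ≤ b' i := by
          have heq : t * b' i / s = t / s * b' i := by ring
          rw [heq]
          have h35 := mul_le_mul_of_nonneg_right h3 (hb'0 i)
          linarith
        have h5 : b i = A.mulVec p i + b' i := by simp [hb']
        rw [h1, h5]
        linarith
      have hy0 : y = p := by
        by_contra hne
        exact hpar ⟨y, hyP, hyge, hne⟩
      have hz0 : ∀ j, z (Sum.inl j) = 0 := by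
        intro j
        have := congrFun hy0 j
        simp only [hy] at this
        have h6 : z (Sum.inl j) / s = 0 := by linarith
        field_simp at h6
        simpa using h6
      simp [hcdef, dotProduct, Fintype.sum_sum_type, hz0]
    obtain ⟨u, hu, hsum⟩ := farkas_aux Finset.univ v c hmain
    set w : Fin n → ℝ := fun j => ∑ i, u (Sum.inl i) * A i j with hwdef
    have hw1 : ∀ j, w j = 1 + u (Sum.inr (Sum.inl j)) := by
      intro j
      have h1 := congrFun hsum (Sum.inl j)
      simp [hcdef, hv, Finset.sum_apply, Fintype.sum_sum_type, mul_ite, mul_zero,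
        Finset.sum_ite_eq] at h1
      simp only [hwdef]
      linarith
    have hwpos : ∀ j, 0 < w j := by
      intro j
      rw [hw1 j]
      have := hu (Sum.inr (Sum.inl j))
      linarith
    have hzero : ∑ i, u (Sum.inl i) * b' i = 0 := by
      have h1 := congrFun hsum (Sum.inr ())
      simp [hcdef, hv, Finset.sum_apply, Fintype.sum_sum_type, mul_ite, mul_zero] at h1
      have h2 : ∑ i, u (Sum.inl i) * b' i ≤ 0 := by
        have := hu (Sum.inr (Sum.inr ()))
        -- h1 should say : ∑ i, u (inl i) * (-(b' i)) + u (inr inr) * (-1) = 0 (some form)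
        nlinarith [h1]
      have h3 : (0:ℝ) ≤ ∑ i, u (Sum.inl i) * b' i :=
        Finset.sum_nonneg fun i _ => mul_nonneg (hu _) (hb'0 i)
      linarith
    refine ⟨w, hwpos, ?_⟩
    intro x hx
    have hswap : ∀ x : Fin n → ℝ, ∑ j, w j * x j = ∑ i, u (Sum.inl i) * A.mulVec x i := by
      intro x
      simp only [hwdef, Matrix.mulVec, dotProduct, Finset.sum_mul, Finset.mul_sum]
      rw [Finset.sum_comm]
      exact Finset.sum_congr rfl fun i _ => Finset.sum_congr rfl fun j _ => by ring
    rw [hswap x, hswap p]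
    have hle : ∑ i, u (Sum.inl i) * A.mulVec x i ≤ ∑ i, u (Sum.inl i) * b i :=
      Finset.sum_le_sum fun i _ => mul_le_mul_of_nonneg_left (hx i) (hu _)
    have hb : ∑ i, u (Sum.inl i) * b i = ∑ i, u (Sum.inl i) * A.mulVec p i := by
      have : ∀ i, u (Sum.inl i) * b i
          = u (Sum.inl i) * A.mulVec p i + u (Sum.inl i) * b' i := by
        intro i
        simp only [hb']
        ring
      rw [Finset.sum_congr rfl fun i _ => this i, Finset.sum_add_distrib, hzero, add_zero]
    linarith
  · rintro ⟨w, hw, hmax⟩ ⟨y, hyP, hyge, hyne⟩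
    have hlt : ∑ j, w j * p j < ∑ j, w j * y j := by
      have hj : ∃ j0, p j0 < y j0 := by
        by_contra hno
        push_neg at hno
        exact hyne (le_antisymm (fun j => hno j) hyge)
      obtain ⟨j0, hj0⟩ := hj
      exact Finset.sum_lt_sum
        (fun j _ => mul_le_mul_of_nonneg_left (hyge j) (le_of_lt (hw j)))
        ⟨j0, Finset.mem_univ _, mul_lt_mul_of_pos_left hj0 (hw j0)⟩
    exact absurd (hmax y hyP) (not_le.mpr hlt)
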